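/- Suppose u = (u₁, u₂, τ), v = (0, v₂, κ) satisfy Qu = v, u₂ ∈ K*, v₂ ∈ K, τ = 0, κ > 0, and bᵀu₂ < 0. Then y = u₂/(−bᵀu₂) (equivalently y = u₂/(bᵀu₂) with appropriate sign) satisfies Aᵀy = 0, y ∈ K*, bᵀy = -1, i.e., is a certificate of primal infeasibility. -/

import Mathlib

open Matrix

/-- The skew-symmetric matrix of the homogeneous self-dual embedding,
`Q = [[0, Aᵀ, c], [-A, 0, b], [-cᵀ, -bᵀ, 0]]`, indexed by `Fin n ⊕ (Fin m ⊕ Unit)`. -/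
def embedQ {m n : ℕ} (A : Matrix (Fin m) (Fin n) ℝ) (b : Fin m → ℝ) (c : Fin n → ℝ) :
    Matrix (Fin n ⊕ (Fin m ⊕ Unit)) (Fin n ⊕ (Fin m ⊕ Unit)) ℝ
  | Sum.inl _, Sum.inl _ => 0
  | Sum.inl i, Sum.inr (Sum.inl j) => A j i
  | Sum.inl i, Sum.inr (Sum.inr _) => c i
  | Sum.inr (Sum.inl i), Sum.inl j => -A i j
  | Sum.inr (Sum.inl _), Sum.inr (Sum.inl _) => 0
  | Sum.inr (Sum.inl i), Sum.inr (Sum.inr _) => b i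
  | Sum.inr (Sum.inr _), Sum.inl j => -c j
  | Sum.inr (Sum.inr _), Sum.inr (Sum.inl j) => -b j
  | Sum.inr (Sum.inr _), Sum.inr (Sum.inr _) => 0

/-- If `Qu = v` holds with `τ = 0`, `κ > 0` and `bᵀu₂ < 0`, then
`y = u₂ / (-bᵀu₂)` is a certificate of primal infeasibility:
`Aᵀy = 0`, `y ∈ K*`, `bᵀy = -1`. -/
theorem embed_primal_infeasibility_certificate
    {m n : ℕ} (A : Matrix (Fin m) (Fin n) ℝ) (b : Fin m → ℝ) (c : Fin n → ℝ)
    (K : Set (Fin m → ℝ)) (hKne : K.Nonempty) (hKcl : IsClosed K) (hKconv : Convex ℝ K)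
    (hKcone : ∀ (t : ℝ), 0 ≤ t → ∀ k ∈ K, t • k ∈ K)
    (u₁ : Fin n → ℝ) (u₂ v₂ : Fin m → ℝ) (κ : ℝ)
    (hu₂ : ∀ k ∈ K, 0 ≤ u₂ ⬝ᵥ k) (hv₂ : v₂ ∈ K) (hκ : 0 < κ)
    (hb : b ⬝ᵥ u₂ < 0)
    (hQuv : embedQ A b c *ᵥ Sum.elim u₁ (Sum.elim u₂ (fun _ => (0 : ℝ)))
      = Sum.elim (0 : Fin n → ℝ) (Sum.elim v₂ (fun _ => κ))) :
    Aᵀ *ᵥ ((-(b ⬝ᵥ u₂))⁻¹ • u₂) = 0 ∧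
    (∀ k ∈ K, 0 ≤ ((-(b ⬝ᵥ u₂))⁻¹ • u₂) ⬝ᵥ k) ∧
    b ⬝ᵥ ((-(b ⬝ᵥ u₂))⁻¹ • u₂) = -1 := by
  have hd : -(b ⬝ᵥ u₂) > 0 := by linarith
  have hAtu : Aᵀ *ᵥ u₂ = 0 := by
    funext i
    have h := congrFun hQuv (Sum.inl i)
    simp only [mulVec, dotProduct, Fintype.sum_sum_type, embedQ, Sum.elim_inl,
      Sum.elim_inr, mul_zero, zero_mul, Finset.sum_const_zero, zero_add, add_zero] at h
    simpa [mulVec, dotProduct, transpose_apply, mul_comm] using h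
  refine ⟨?_, ?_, ?_⟩
  · rw [mulVec_smul, hAtu, smul_zero]
  · intro k hk
    have := hu₂ k hk
    have h2 : ((-(b ⬝ᵥ u₂))⁻¹ • u₂) ⬝ᵥ k = (-(b ⬝ᵥ u₂))⁻¹ * (u₂ ⬝ᵥ k) := by
      simp [smul_dotProduct]
    rw [h2]
    positivity
  · rw [dotProduct_smul, smul_eq_mul]
    have hne : b ⬝ᵥ u₂ ≠ 0 := hb.ne
    field_simp
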